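/- Let d ≥ 2 be an integer, n : ℕ, and p ∈ [0,1]. Let e be the equivalence (Fin n → Fin d × Fin d) ≃ (Fin n → Fin d) × (Fin n → Fin d) given by f ↦ (fun m => (f m).1, fun m => (f m).2). If E is a matrix indexed by (Fin n → Fin d × Fin d) such that both E and 1 − E, reindexed along e, are separable with respect to the Alice/Bob bipartition, then Re(p · Tr(E · σ_d^{⊗n}) + (1−p) · Tr((1 − E) · α_d^{⊗n})) ≥ min(p · ((d−1)/(d+1))^n, 1−p). -/

import Mathlib

open Matrix Finset
open scoped BigOperators Kronecker ComplexOrder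

noncomputable section

/-- The flip (swap) operator on `ℂ^d ⊗ ℂ^d`. -/
def Flip (d : ℕ) : Matrix (Fin d × Fin d) (Fin d × Fin d) ℂ :=
  Matrix.of fun p q => if p.1 = q.2 ∧ p.2 = q.1 then 1 else 0

/-- Projection onto the symmetric subspace, `Π_s = (1 + F)/2`. -/
def projSym (d : ℕ) : Matrix (Fin d × Fin d) (Fin d × Fin d) ℂ :=
  (2 : ℂ)⁻¹ • (1 + Flip d)

/-- Projection onto the antisymmetric subspace, `Π_a = (1 - F)/2`. -/
def projAsym (d : ℕ) : Matrix (Fin d × Fin d) (Fin d × Fin d) ℂ :=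
  (2 : ℂ)⁻¹ • (1 - Flip d)

/-- The symmetric Werner state `σ_d = (2/(d(d+1))) • Π_s`. -/
def wernerSym (d : ℕ) : Matrix (Fin d × Fin d) (Fin d × Fin d) ℂ :=
  (2 / ((d : ℂ) * ((d : ℂ) + 1))) • projSym d

/-- The antisymmetric Werner state `α_d = (2/(d(d-1))) • Π_a`. -/
def wernerAsym (d : ℕ) : Matrix (Fin d × Fin d) (Fin d × Fin d) ℂ :=
  (2 / ((d : ℂ) * ((d : ℂ) - 1))) • projAsym d

/-- The POVM element `G_d`: diagonal, with `(i,j),(i,j)` entry `1` iff `i ≠ j`. -/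
def Gmat (d : ℕ) : Matrix (Fin d × Fin d) (Fin d × Fin d) ℂ :=
  Matrix.diagonal fun p => if p.1 ≠ p.2 then 1 else 0

/-- `n`-fold tensor power of a matrix on `ℂ^d ⊗ ℂ^d`. -/
def tpow {d : ℕ} (n : ℕ) (X : Matrix (Fin d × Fin d) (Fin d × Fin d) ℂ) :
    Matrix (Fin n → Fin d × Fin d) (Fin n → Fin d × Fin d) ℂ :=
  Matrix.of fun f g => ∏ m, X (f m) (g m)

/-- The twirled single-copy POVM element `M_d = ((d-1)/(d+1)) • Π_s + Π_a`. -/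
def MdMat (d : ℕ) : Matrix (Fin d × Fin d) (Fin d × Fin d) ℂ :=
  (((d : ℂ) - 1) / ((d : ℂ) + 1)) • projSym d + projAsym d

/-- `A_k`: sum over all `k`-element subsets `S` of the copies of the tensor product with
`Π_a` on copies in `S` and `Π_s` elsewhere. -/
def Amat (d n k : ℕ) : Matrix (Fin n → Fin d × Fin d) (Fin n → Fin d × Fin d) ℂ :=
  ∑ S ∈ Finset.powersetCard k (Finset.univ : Finset (Fin n)),
    Matrix.of fun f g => ∏ m, (if m ∈ S then projAsym d else projSym d) (f m) (g m)

/-- Partial transpose on `ℂ^d ⊗ ℂ^d`. -/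
def pt {d : ℕ} (X : Matrix (Fin d × Fin d) (Fin d × Fin d) ℂ) :
    Matrix (Fin d × Fin d) (Fin d × Fin d) ℂ :=
  Matrix.of fun p q => X (p.1, q.2) (q.1, p.2)

/-- The maximally entangled state `Φ_d`. -/
def Phi (d : ℕ) : Matrix (Fin d × Fin d) (Fin d × Fin d) ℂ :=
  Matrix.of fun p q => if p.1 = p.2 ∧ q.1 = q.2 then ((d : ℂ))⁻¹ else 0

/-- `n`-copy partial transpose. -/
def ptN {d n : ℕ} (Y : Matrix (Fin n → Fin d × Fin d) (Fin n → Fin d × Fin d) ℂ) :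
    Matrix (Fin n → Fin d × Fin d) (Fin n → Fin d × Fin d) ℂ :=
  Matrix.of fun f g => Y (fun m => ((f m).1, (g m).2)) (fun m => ((g m).1, (f m).2))

/-- `T_l`: sum over all `l`-element subsets `S` of the copies of the tensor product with
`Φ_d` on copies in `S` and `1 - Φ_d` elsewhere. -/
def Tmat (d n l : ℕ) : Matrix (Fin n → Fin d × Fin d) (Fin n → Fin d × Fin d) ℂ :=
  ∑ S ∈ Finset.powersetCard l (Finset.univ : Finset (Fin n)),
    Matrix.of fun f g => ∏ m, (if m ∈ S then Phi d else (1 - Phi d)) (f m) (g m)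

/-- The matrix `Q` of the linear program: `Q l k = Σ_{j=0}^{min(l,k)}
(n−l choose k−j)(l choose j)(1−d)^j (1+d)^{l−j}`. -/
def Qmat (n : ℕ) (d : ℝ) (l k : ℕ) : ℝ :=
  ∑ j ∈ Finset.range (min l k + 1),
    ((n - l).choose (k - j) : ℝ) * (l.choose j : ℝ) * (1 - d) ^ j * (1 + d) ^ (l - j)

/-- A PPT POVM element on the `n`-copy space: `E`, `1 - E`, `E^Γ`, `(1-E)^Γ` all PSD. -/
def IsPPTPovmElem {d n : ℕ}
    (E : Matrix (Fin n → Fin d × Fin d) (Fin n → Fin d × Fin d) ℂ) : Prop :=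
  E.PosSemidef ∧ (1 - E).PosSemidef ∧ (ptN E).PosSemidef ∧ (ptN (1 - E)).PosSemidef

/-- Error probability for discriminating `σ_d^{⊗n}` (prior `p`) from `α_d^{⊗n}`
(prior `1-p`) with the two-outcome POVM `{E, 1 - E}`. -/
def errProb (d n : ℕ) (p : ℝ)
    (E : Matrix (Fin n → Fin d × Fin d) (Fin n → Fin d × Fin d) ℂ) : ℝ :=
  ((p : ℂ) * (E * tpow n (wernerSym d)).trace
    + (1 - (p : ℂ)) * ((1 - E) * tpow n (wernerAsym d)).trace).re

/-- Separability of a bipartite matrix. -/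
def IsSep {I J : Type*} [Fintype I] [Fintype J]
    (W : Matrix (I × J) (I × J) ℂ) : Prop :=
  ∃ (m : ℕ) (A : Fin m → Matrix I I ℂ) (B : Fin m → Matrix J J ℂ),
    (∀ i, (A i).PosSemidef) ∧ (∀ i, (B i).PosSemidef) ∧ W = ∑ i, A i ⊗ₖ B i

/-- Trace norm `‖X‖₁ = Tr √(Xᴴ X)`. -/
def traceNorm {ι : Type*} [Fintype ι] [DecidableEq ι] (X : Matrix ι ι ℂ) : ℝ :=
  (((Matrix.posSemidef_conjTranspose_mul_self X).1.eigenvectorUnitary : Matrix ι ι ℂ) *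
    Matrix.diagonal (fun i => ((Real.sqrt
      ((Matrix.posSemidef_conjTranspose_mul_self X).1.eigenvalues i) : ℝ) : ℂ)) *
    (star (Matrix.posSemidef_conjTranspose_mul_self X).1.eigenvectorUnitary :
      Matrix ι ι ℂ)).trace.re


/-- Frobenius (Hilbert–Schmidt) norm `‖X‖₂ = √(Tr (Xᴴ X))`. -/
def frobNorm {ι : Type*} [Fintype ι] (X : Matrix ι ι ℂ) : ℝ :=
  Real.sqrt ((Xᴴ * X).trace.re)

-- ==================== auxiliary lemmas ====================

section Aux
open Matrix

lemma psd_of_gram {β γ : Type*} [Fintype β] [Fintype γ] {M : Matrix β β ℂ}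
    (C : Matrix γ β ℂ) (h : M = Cᴴ * C) : M.PosSemidef :=
  h ▸ Matrix.posSemidef_conjTranspose_mul_self C

lemma half_psd {β : Type*} [Fintype β] {M : Matrix β β ℂ} (h : M.PosSemidef) :
    ((2:ℂ)⁻¹ • M).PosSemidef := by
  constructor
  · have h1 := h.1.eq
    unfold Matrix.IsHermitian
    rw [Matrix.conjTranspose_smul, h1]
    norm_num
  · intro x
    exact (h.smul (show (0:ℂ) ≤ (2:ℂ)⁻¹ by rw [Complex.nonneg_iff]; norm_num)).2 x

lemma psd_gram' {β : Type*} [Fintype β] [DecidableEq β] {M : Matrix β β ℂ}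
    (h : M.PosSemidef) : ∃ C : Matrix β β ℂ, M = Cᴴ * C := by
  open scoped MatrixOrder in
  exact CStarAlgebra.nonneg_iff_eq_star_mul_self.mp h.nonneg

lemma kron_psd {I J : Type*} [Fintype I] [Fintype J] [DecidableEq I] [DecidableEq J]
    {A : Matrix I I ℂ} {B : Matrix J J ℂ} (hA : A.PosSemidef) (hB : B.PosSemidef) :
    (A ⊗ₖ B).PosSemidef := by
  obtain ⟨C, rfl⟩ := psd_gram' hA
  obtain ⟨D, rfl⟩ := psd_gram' hB
  have hct : (C ⊗ₖ D)ᴴ = Cᴴ ⊗ₖ Dᴴ := by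
    ext ⟨a,b⟩ ⟨c,e⟩
    simp [Matrix.conjTranspose_apply, Matrix.kroneckerMap_apply, mul_comm]
  refine psd_of_gram (C ⊗ₖ D) ?_
  rw [hct, ← Matrix.mul_kronecker_mul]

lemma fam_psd {κ : Type*} [Fintype κ] [DecidableEq κ] {n : ℕ}
    (X : Fin n → Matrix κ κ ℂ) (hX : ∀ m, (X m).PosSemidef) :
    (Matrix.of fun f g : Fin n → κ => ∏ m, X m (f m) (g m)).PosSemidef := by
  choose C hC using fun m => psd_gram' (hX m)
  refine psd_of_gram (Matrix.of fun (h f : Fin n → κ) => ∏ m, C m (h m) (f m)) ?_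
  ext f g
  simp only [Matrix.of_apply, Matrix.mul_apply, Matrix.conjTranspose_apply, Matrix.of_apply]
  have key : ∀ m, X m (f m) (g m) = ∑ r, star (C m r (f m)) * C m r (g m) := by
    intro m
    rw [hC m]
    simp [Matrix.mul_apply, Matrix.conjTranspose_apply]
  simp_rw [key, Fintype.prod_sum]
  refine Finset.sum_congr rfl fun h _ => ?_
  rw [Finset.prod_mul_distrib]
  simp [star_prod]

lemma mix_psd {κ : Type*} [Fintype κ] [DecidableEq κ] {n : ℕ}
    {X : Matrix κ κ ℂ} {N : Matrix (Fin n → κ) (Fin n → κ) ℂ}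
    (hX : X.PosSemidef) (hN : N.PosSemidef) :
    (Matrix.of fun f g : Fin (n+1) → κ =>
      X (f 0) (g 0) * N (Fin.tail f) (Fin.tail g)).PosSemidef := by
  obtain ⟨C, hC⟩ := psd_gram' hX
  obtain ⟨D, hD⟩ := psd_gram' hN
  refine psd_of_gram (Matrix.of fun (rh : κ × (Fin n → κ)) (f : Fin (n+1) → κ) =>
    C rh.1 (f 0) * D rh.2 (Fin.tail f)) ?_
  ext f g
  simp only [Matrix.of_apply, Matrix.mul_apply, Matrix.conjTranspose_apply,
    Fintype.sum_prod_type, hC, hD]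
  rw [Finset.sum_mul_sum]
  refine Finset.sum_congr rfl fun r _ => Finset.sum_congr rfl fun h _ => ?_
  simp only [star_mul']
  ring

lemma trace_psd_nonneg {β : Type*} [Fintype β] [DecidableEq β] {M : Matrix β β ℂ}
    (h : M.PosSemidef) : 0 ≤ M.trace := by
  obtain ⟨C, rfl⟩ := psd_gram' h
  rw [Matrix.trace]
  refine Finset.sum_nonneg fun i _ => ?_
  rw [Matrix.diag_apply, Matrix.mul_apply]
  exact Finset.sum_nonneg fun j _ => by
    rw [Matrix.conjTranspose_apply]
    exact star_mul_self_nonneg _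

lemma trace_mul_psd_nonneg {β : Type*} [Fintype β] [DecidableEq β]
    {A B : Matrix β β ℂ} (hA : A.PosSemidef) (hB : B.PosSemidef) :
    0 ≤ (A * B).trace := by
  obtain ⟨C, rfl⟩ := psd_gram' hB
  rw [show A * (Cᴴ * C) = A * Cᴴ * C by rw [Matrix.mul_assoc],
    Matrix.trace_mul_comm, ← Matrix.mul_assoc]
  exact trace_psd_nonneg (hA.mul_mul_conjTranspose_same C)

end Aux

section Aux2
variable {d : ℕ}

lemma flip_conjTranspose : (Flip d)ᴴ = Flip d := by
  ext p q
  simp only [Matrix.conjTranspose_apply, Flip, Matrix.of_apply]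
  by_cases h : q.1 = p.2 ∧ q.2 = p.1
  · rw [if_pos h, if_pos ⟨h.2.symm, h.1.symm⟩]; simp
  · rw [if_neg h, if_neg (fun h' => h ⟨h'.2.symm, h'.1.symm⟩)]; simp

lemma flip_mul_flip : Flip d * Flip d = 1 := by
  ext p q
  rw [Matrix.mul_apply, Finset.sum_eq_single (p.2, p.1)]
  · simp only [Flip, Matrix.of_apply, Matrix.one_apply]
    by_cases h : p = q
    · subst h; simp
    · have hne : ¬(p.2 = q.2 ∧ p.1 = q.1) := fun hc => h (Prod.ext hc.2 hc.1)
      simp [h, hne]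
  · intro r _ hr
    rw [show Flip d p r = 0 from ?_, zero_mul]
    simp only [Flip, Matrix.of_apply]
    rw [if_neg (fun hc => hr (Prod.ext hc.2.symm hc.1.symm))]
  · simp

lemma projSym_psd : (projSym d).PosSemidef := by
  have herm : (projSym d)ᴴ = projSym d := by
    unfold projSym
    rw [Matrix.conjTranspose_smul, Matrix.conjTranspose_add, Matrix.conjTranspose_one,
      flip_conjTranspose]
    norm_num
  have h2 : (1 + Flip d) * (1 + Flip d) = (2:ℂ) • (1 + Flip d) := by
    rw [two_smul, add_mul, one_mul, mul_add, mul_one, flip_mul_flip]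
    abel
  have hidem : projSym d * projSym d = projSym d := by
    unfold projSym
    rw [Matrix.smul_mul, Matrix.mul_smul, h2, smul_smul, smul_smul]
    norm_num
  exact psd_of_gram (projSym d) (by rw [herm, hidem])

lemma projAsym_psd : (projAsym d).PosSemidef := by
  have herm : (projAsym d)ᴴ = projAsym d := by
    unfold projAsym
    rw [Matrix.conjTranspose_smul, Matrix.conjTranspose_sub, Matrix.conjTranspose_one,
      flip_conjTranspose]
    norm_num
  have h2 : (1 - Flip d) * (1 - Flip d) = (2:ℂ) • (1 - Flip d) := by
    rw [two_smul, sub_mul, one_mul, mul_sub, mul_one, flip_mul_flip]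
    abel
  have hidem : projAsym d * projAsym d = projAsym d := by
    unfold projAsym
    rw [Matrix.smul_mul, Matrix.mul_smul, h2, smul_smul, smul_smul]
    norm_num
  exact psd_of_gram (projAsym d) (by rw [herm, hidem])

/-- the partial transpose of the flip: `d • Φ` -/
def Gm (d : ℕ) : Matrix (Fin d × Fin d) (Fin d × Fin d) ℂ :=
  Matrix.of fun p q => if p.1 = p.2 ∧ q.1 = q.2 then 1 else 0

lemma Gm_psd : (Gm d).PosSemidef := by
  refine psd_of_gram (Matrix.of fun (_ : Unit) (p : Fin d × Fin d) =>
    if p.1 = p.2 then (1:ℂ) else 0) ?_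
  ext p q
  simp only [Gm, Matrix.of_apply, Matrix.mul_apply, Matrix.conjTranspose_apply,
    Finset.univ_unique, Finset.sum_singleton]
  by_cases hp : p.1 = p.2 <;> by_cases hq : q.1 = q.2 <;> simp [hp, hq]

end Aux2
end

section Aux3
variable {d : ℕ}

lemma tpow_zero (X : Matrix (Fin d × Fin d) (Fin d × Fin d) ℂ) : tpow 0 X = 1 := by
  ext f g
  simp [tpow, Matrix.one_apply, Subsingleton.elim f g]

lemma tpow_succ {n : ℕ} (X : Matrix (Fin d × Fin d) (Fin d × Fin d) ℂ) :
    tpow (n+1) X = Matrix.of fun f g : Fin (n+1) → Fin d × Fin d =>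
      X (f 0) (g 0) * tpow n X (Fin.tail f) (Fin.tail g) := by
  ext f g
  simp only [tpow, Matrix.of_apply, Fin.prod_univ_succ]
  rfl

lemma tpow_psd {n : ℕ} {X : Matrix (Fin d × Fin d) (Fin d × Fin d) ℂ}
    (hX : X.PosSemidef) : (tpow n X).PosSemidef :=
  fam_psd (fun _ => X) (fun _ => hX)

lemma ptN_tpow {n : ℕ} (X : Matrix (Fin d × Fin d) (Fin d × Fin d) ℂ) :
    ptN (tpow n X) = tpow n (pt X) := rfl

lemma pt_projSym : pt (projSym d) = (2:ℂ)⁻¹ • (1 + Gm d) := by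
  ext ⟨a,b⟩ ⟨c,e⟩
  simp only [pt, projSym, Flip, Gm, Matrix.of_apply, Matrix.smul_apply, Matrix.add_apply,
    Matrix.one_apply, smul_eq_mul]
  simp only [show ((a,e) = ((c,b) : Fin d × Fin d)) ↔ ((a,b) = ((c,e) : Fin d × Fin d)) from by
      constructor <;> (intro h; rw [Prod.ext_iff] at h ⊢; exact ⟨h.1, h.2.symm⟩),
    show (a = b ∧ e = c) ↔ (a = b ∧ c = e) from by
      constructor <;> (rintro ⟨h1,h2⟩; exact ⟨h1, h2.symm⟩)]

lemma pt_projAsym : pt (projAsym d) = (2:ℂ)⁻¹ • (1 - Gm d) := by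
  ext ⟨a,b⟩ ⟨c,e⟩
  simp only [pt, projAsym, Flip, Gm, Matrix.of_apply, Matrix.smul_apply, Matrix.sub_apply,
    Matrix.one_apply, smul_eq_mul]
  simp only [show ((a,e) = ((c,b) : Fin d × Fin d)) ↔ ((a,b) = ((c,e) : Fin d × Fin d)) from by
      constructor <;> (intro h; rw [Prod.ext_iff] at h ⊢; exact ⟨h.1, h.2.symm⟩),
    show (a = b ∧ e = c) ↔ (a = b ∧ c = e) from by
      constructor <;> (rintro ⟨h1,h2⟩; exact ⟨h1, h2.symm⟩)]

lemma one_psd {β : Type*} [Fintype β] [DecidableEq β] :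
    (1 : Matrix β β ℂ).PosSemidef := psd_of_gram 1 (by rw [Matrix.conjTranspose_one, Matrix.one_mul])

lemma SA_psd (d n : ℕ) :
    (tpow n ((2:ℂ)⁻¹ • (1 + Gm d)) - tpow n ((2:ℂ)⁻¹ • (1 - Gm d))).PosSemidef ∧
    (tpow n ((2:ℂ)⁻¹ • (1 + Gm d)) + tpow n ((2:ℂ)⁻¹ • (1 - Gm d))).PosSemidef := by
  set As := (2:ℂ)⁻¹ • (1 + Gm d) with hAs
  set Aa := (2:ℂ)⁻¹ • (1 - Gm d) with hAa
  induction n with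
  | zero =>
    rw [tpow_zero, tpow_zero, sub_self]
    exact ⟨Matrix.PosSemidef.zero, one_psd.add one_psd⟩
  | succ n ih =>
    obtain ⟨ihd, ihs⟩ := ih
    constructor
    · have key : tpow (n+1) As - tpow (n+1) Aa
          = (2:ℂ)⁻¹ • ((Matrix.of fun f g : Fin (n+1) → Fin d × Fin d =>
              (1 : Matrix (Fin d × Fin d) (Fin d × Fin d) ℂ) (f 0) (g 0) *
                (tpow n As - tpow n Aa) (Fin.tail f) (Fin.tail g)) +
            (Matrix.of fun f g : Fin (n+1) → Fin d × Fin d =>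
              Gm d (f 0) (g 0) * (tpow n As + tpow n Aa) (Fin.tail f) (Fin.tail g))) := by
        rw [tpow_succ, tpow_succ]
        ext f g
        simp only [Matrix.of_apply, Matrix.sub_apply, Matrix.add_apply, Matrix.smul_apply,
          smul_eq_mul, hAs, hAa]
        ring
      rw [key]
      exact half_psd ((mix_psd one_psd ihd).add (mix_psd Gm_psd ihs))
    · have key : tpow (n+1) As + tpow (n+1) Aa
          = (2:ℂ)⁻¹ • ((Matrix.of fun f g : Fin (n+1) → Fin d × Fin d =>
              (1 : Matrix (Fin d × Fin d) (Fin d × Fin d) ℂ) (f 0) (g 0) *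
                (tpow n As + tpow n Aa) (Fin.tail f) (Fin.tail g)) +
            (Matrix.of fun f g : Fin (n+1) → Fin d × Fin d =>
              Gm d (f 0) (g 0) * (tpow n As - tpow n Aa) (Fin.tail f) (Fin.tail g))) := by
        rw [tpow_succ, tpow_succ]
        ext f g
        simp only [Matrix.of_apply, Matrix.sub_apply, Matrix.add_apply, Matrix.smul_apply,
          smul_eq_mul, hAs, hAa]
        ring
      rw [key]
      exact half_psd ((mix_psd one_psd ihs).add (mix_psd Gm_psd ihd))

end Aux3

section Aux4
variable {d n : ℕ}

/-- the index-shuffling involution underlying the partial transpose -/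
def ptEquiv (d n : ℕ) :
    ((Fin n → Fin d × Fin d) × (Fin n → Fin d × Fin d)) ≃
    ((Fin n → Fin d × Fin d) × (Fin n → Fin d × Fin d)) where
  toFun x := (fun m => ((x.1 m).1, (x.2 m).2), fun m => ((x.2 m).1, (x.1 m).2))
  invFun x := (fun m => ((x.1 m).1, (x.2 m).2), fun m => ((x.2 m).1, (x.1 m).2))
  left_inv x := by ext m <;> simp
  right_inv x := by ext m <;> simp

lemma trace_ptN_mul (A B : Matrix (Fin n → Fin d × Fin d) (Fin n → Fin d × Fin d) ℂ) :
    (ptN A * ptN B).trace = (A * B).trace := by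
  have lhs : (ptN A * ptN B).trace
      = ∑ x : (Fin n → Fin d × Fin d) × (Fin n → Fin d × Fin d),
          A ((ptEquiv d n) x).1 ((ptEquiv d n) x).2 *
          B ((ptEquiv d n) x).2 ((ptEquiv d n) x).1 := by
    rw [Matrix.trace, Fintype.sum_prod_type]
    refine Finset.sum_congr rfl fun f _ => ?_
    rw [Matrix.diag_apply, Matrix.mul_apply]
    rfl
  have rhs : (A * B).trace
      = ∑ x : (Fin n → Fin d × Fin d) × (Fin n → Fin d × Fin d),
          A x.1 x.2 * B x.2 x.1 := by
    rw [Matrix.trace, Fintype.sum_prod_type]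
    refine Finset.sum_congr rfl fun f _ => ?_
    rw [Matrix.diag_apply, Matrix.mul_apply]
  rw [lhs, rhs]
  exact Equiv.sum_comp (ptEquiv d n) (fun x => A x.1 x.2 * B x.2 x.1)

lemma ptN_sub (A B : Matrix (Fin n → Fin d × Fin d) (Fin n → Fin d × Fin d) ℂ) :
    ptN (A - B) = ptN A - ptN B := by
  ext f g
  simp [ptN]

/-- consequences of separability : PSD and PSD partial transpose -/
lemma sep_psd {E : Matrix (Fin n → Fin d × Fin d) (Fin n → Fin d × Fin d) ℂ}
    (hE : IsSep (Matrix.reindex (Equiv.arrowProdEquivProdArrow (Fin n) (fun _ => Fin d) (fun _ => Fin d))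
        (Equiv.arrowProdEquivProdArrow (Fin n) (fun _ => Fin d) (fun _ => Fin d)) E)) :
    E.PosSemidef ∧ (ptN E).PosSemidef := by
  obtain ⟨m, A, B, hA, hB, hW⟩ := hE
  set e := Equiv.arrowProdEquivProdArrow (Fin n) (fun _ => Fin d) (fun _ => Fin d) with he
  have hEeq : E = (∑ i, A i ⊗ₖ B i).submatrix e e := by
    ext f g
    have h2 := congrArg (fun M : Matrix ((Fin n → Fin d) × (Fin n → Fin d))
      ((Fin n → Fin d) × (Fin n → Fin d)) ℂ => M (e f) (e g)) hW
    simpa [Matrix.reindex_apply, Matrix.submatrix_apply] using h2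
  constructor
  · rw [hEeq]
    exact (Matrix.PosSemidef.submatrix (by
      refine Finset.sum_induction _ _ (fun x y hx hy => hx.add hy) Matrix.PosSemidef.zero ?_
      intro i _
      exact kron_psd (hA i) (hB i)) e)
  · have : ptN E = (∑ i, A i ⊗ₖ (B i)ᵀ).submatrix e e := by
      ext f g
      rw [hEeq]
      simp only [ptN, Matrix.of_apply, Matrix.submatrix_apply, Matrix.sum_apply,
        Matrix.kroneckerMap_apply, Matrix.transpose_apply]
      rfl
    rw [this]
    refine Matrix.PosSemidef.submatrix ?_ e
    refine Finset.sum_induction _ _ (fun x y hx hy => hx.add hy) Matrix.PosSemidef.zero ?_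
    intro i _
    exact kron_psd (hA i) ((hB i).transpose)

end Aux4

section Aux5
variable {d n : ℕ}

lemma tpow_smul (n : ℕ) (c : ℂ) (X : Matrix (Fin d × Fin d) (Fin d × Fin d) ℂ) :
    tpow n (c • X) = c ^ n • tpow n X := by
  ext f g
  simp [tpow, Matrix.smul_apply, smul_eq_mul, Finset.prod_mul_distrib, Finset.card_univ]

lemma trace_tpow (n : ℕ) (X : Matrix (Fin d × Fin d) (Fin d × Fin d) ℂ) :
    (tpow n X).trace = X.trace ^ n := by
  simp only [Matrix.trace, Matrix.diag_apply, tpow, Matrix.of_apply]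
  exact (Fintype.sum_pow (fun r => X r r) n).symm

lemma trace_projAsym : (projAsym d).trace = ((d:ℂ) * d - d) / 2 := by
  have hF : (Flip d).trace = (d:ℂ) := by
    simp only [Matrix.trace, Matrix.diag_apply, Flip, Matrix.of_apply]
    rw [Fintype.sum_prod_type]
    have : ∀ i : Fin d, (∑ j : Fin d, if i = j ∧ j = i then (1:ℂ) else 0) = 1 := by
      intro i
      rw [Finset.sum_eq_single i]
      · simp
      · intro j _ hj
        rw [if_neg (fun hc => hj hc.2)]
      · simp
    simp [this]
  rw [projAsym, Matrix.trace_smul, Matrix.trace_sub, Matrix.trace_one, hF]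
  simp [Fintype.card_prod]
  ring

end Aux5

lemma final_real (n : ℕ) (dr p tr ur : ℝ) (hdr : 2 ≤ dr) (hp0 : 0 ≤ p) (hp1 : p ≤ 1)
    (hur0 : 0 ≤ ur) (htr : ur ≤ tr) (hurM : ur ≤ ((dr * dr - dr) / 2) ^ n) :
    p * (2 / (dr * (dr + 1))) ^ n * tr
      + (1 - p) * (2 / (dr * (dr - 1))) ^ n * (((dr * dr - dr) / 2) ^ n - ur)
      ≥ min (p * ((dr - 1) / (dr + 1)) ^ n) (1 - p) := by
  set σr : ℝ := 2 / (dr * (dr + 1)) with hσr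
  set αr : ℝ := 2 / (dr * (dr - 1)) with hαr
  set Ta : ℝ := (dr * dr - dr) / 2 with hTa
  have hd1 : (0:ℝ) < dr - 1 := by linarith
  have hd0 : (0:ℝ) < dr := by linarith
  have hσr0 : 0 < σr := by rw [hσr]; positivity
  have hαr0 : 0 < αr := by rw [hαr]; positivity
  have hαT : αr * Ta = 1 := by
    rw [hαr, hTa]
    field_simp
  have hσT : σr * Ta = (dr - 1) / (dr + 1) := by
    rw [hσr, hTa, div_mul_eq_mul_div, div_eq_div_iff (by positivity) (by positivity)]
    ring
  have hαTn : αr ^ n * Ta ^ n = 1 := by rw [← mul_pow, hαT, one_pow]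
  have hσTn : σr ^ n * Ta ^ n = ((dr - 1) / (dr + 1)) ^ n := by rw [← mul_pow, hσT]
  have step1 : p * σr ^ n * tr + (1 - p) * αr ^ n * (Ta ^ n - ur)
      ≥ p * σr ^ n * ur + (1 - p) * αr ^ n * (Ta ^ n - ur) := by
    have h5 : 0 ≤ p * σr ^ n := by positivity
    nlinarith
  refine le_trans ?_ step1
  have hσn0 : 0 ≤ σr ^ n := by positivity
  have hαn0 : 0 ≤ αr ^ n := by positivity
  rcases le_or_gt ((1 - p) * αr ^ n) (p * σr ^ n) with hs | hs
  · refine le_trans (min_le_right _ _) ?_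
    nlinarith
  · refine le_trans (min_le_left _ _) ?_
    nlinarith [mul_le_mul_of_nonneg_left hurM (sub_pos.mpr hs).le]

/-- lower bound on the error probability of any separable POVM element. -/
theorem sep_error_lower_bound (d : ℕ) (hd : 2 ≤ d) (n : ℕ) (p : ℝ)
    (hp0 : 0 ≤ p) (hp1 : p ≤ 1)
    (E : Matrix (Fin n → Fin d × Fin d) (Fin n → Fin d × Fin d) ℂ)
    (hE : IsSep (Matrix.reindex (Equiv.arrowProdEquivProdArrow (Fin n) (fun _ => Fin d) (fun _ => Fin d))
        (Equiv.arrowProdEquivProdArrow (Fin n) (fun _ => Fin d) (fun _ => Fin d)) E))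
    (hE1 : IsSep (Matrix.reindex (Equiv.arrowProdEquivProdArrow (Fin n) (fun _ => Fin d) (fun _ => Fin d))
        (Equiv.arrowProdEquivProdArrow (Fin n) (fun _ => Fin d) (fun _ => Fin d)) (1 - E))) :
    ((p : ℂ) * (E * tpow n (wernerSym d)).trace
        + (1 - (p : ℂ)) * ((1 - E) * tpow n (wernerAsym d)).trace).re
      ≥ min (p * (((d : ℝ) - 1) / ((d : ℝ) + 1)) ^ n) (1 - p) := by
  classical
  obtain ⟨hEpsd, hEpt⟩ := sep_psd hE
  obtain ⟨hE1psd, _⟩ := sep_psd hE1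
  set Ps := tpow n (projSym d) with hPs
  set Pa := tpow n (projAsym d) with hPa
  have hkey : 0 ≤ (E * (Ps - Pa)).trace := by
    rw [← trace_ptN_mul]
    refine trace_mul_psd_nonneg hEpt ?_
    rw [ptN_sub, hPs, hPa, ptN_tpow, ptN_tpow, pt_projSym, pt_projAsym]
    exact (SA_psd d n).1
  have h2 : 0 ≤ (E * Pa).trace := trace_mul_psd_nonneg hEpsd (tpow_psd projAsym_psd)
  have h3 : 0 ≤ ((1 - E) * Pa).trace :=
    trace_mul_psd_nonneg hE1psd (tpow_psd projAsym_psd)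
  set t := (E * Ps).trace with ht
  set u := (E * Pa).trace with hu
  set w := ((1 - E) * Pa).trace with hw
  have hkey' : 0 ≤ t - u := by
    rwa [Matrix.mul_sub, Matrix.trace_sub] at hkey
  rw [Complex.nonneg_iff] at hkey' h2 h3
  have huim : u.im = 0 := h2.2.symm
  have hwim : w.im = 0 := h3.2.symm
  have htim : t.im = 0 := by
    have h4 := hkey'.2
    simp only [Complex.sub_im] at h4
    linarith
  have hure : 0 ≤ u.re := h2.1
  have hwre : 0 ≤ w.re := h3.1
  have htre : u.re ≤ t.re := by
    have h4 := hkey'.1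
    simp only [Complex.sub_re] at h4
    linarith
  have hwu : w = ((((d:ℝ) * (d:ℝ) - (d:ℝ)) / 2 : ℝ) : ℂ) ^ n - u := by
    rw [hw, Matrix.sub_mul, Matrix.one_mul, Matrix.trace_sub, hPa, trace_tpow,
      trace_projAsym, ← hu]
    push_cast
    ring
  set Ta : ℝ := ((d:ℝ) * (d:ℝ) - (d:ℝ)) / 2 with hTa
  have hwre' : w.re = Ta ^ n - u.re := by
    rw [hwu]
    simp [Complex.sub_re, ← Complex.ofReal_pow]
  have hσ : tpow n (wernerSym d) = (((2 / ((d:ℝ) * ((d:ℝ) + 1)) : ℝ) : ℂ)) ^ n • Ps := by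
    rw [hPs, wernerSym, tpow_smul]
    norm_num
  have hα : tpow n (wernerAsym d) = (((2 / ((d:ℝ) * ((d:ℝ) - 1)) : ℝ) : ℂ)) ^ n • Pa := by
    rw [hPa, wernerAsym, tpow_smul]
    norm_num
  set σr : ℝ := 2 / ((d:ℝ) * ((d:ℝ) + 1)) with hσr
  set αr : ℝ := 2 / ((d:ℝ) * ((d:ℝ) - 1)) with hαr
  have hrewrite : ((p : ℂ) * (E * tpow n (wernerSym d)).trace
        + (1 - (p : ℂ)) * ((1 - E) * tpow n (wernerAsym d)).trace).re
      = p * σr ^ n * t.re + (1 - p) * αr ^ n * w.re := by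
    rw [hσ, hα, Matrix.mul_smul, Matrix.mul_smul, Matrix.trace_smul, Matrix.trace_smul,
      ← ht, ← hw]
    have ht2 : t = ((t.re : ℝ) : ℂ) := Complex.ext rfl (by simp [htim])
    have hw2 : w = ((w.re : ℝ) : ℂ) := Complex.ext rfl (by simp [hwim])
    rw [ht2, hw2]
    rw [show (p : ℂ) * ((((σr : ℝ) : ℂ)) ^ n • ((t.re : ℝ) : ℂ))
        + (1 - (p : ℂ)) * ((((αr : ℝ) : ℂ)) ^ n • ((w.re : ℝ) : ℂ))
        = (((p * σr ^ n * t.re + (1 - p) * αr ^ n * w.re : ℝ)) : ℂ) by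
      push_cast
      simp only [smul_eq_mul]
      ring]
    rw [Complex.ofReal_re]
    simp
  rw [hrewrite, hwre']
  have hdr : (2:ℝ) ≤ (d:ℝ) := by exact_mod_cast hd
  have hurM : u.re ≤ Ta ^ n := by
    rw [hwre'] at hwre
    linarith
  exact final_real n (d:ℝ) p t.re u.re hdr hp0 hp1 hure htre hurM
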